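/- Let Σ_{t-1} ≻ 0, r > 0, x ∈ ℝ^d, and set Σ̃_t⁻¹ = Σ_{t-1}⁻¹ + (1/r)xxᵀ. Given w_{t-1}, u ∈ ℝ^d and y ∈ ℝ, let w̃_t = w_{t-1} + ((y − xᵀw_{t-1})/(r + xᵀΣ_{t-1}x))·Σ_{t-1}x, and define ℓ = (y − xᵀw_{t-1})², g = (y − xᵀu)², χ = xᵀΣ_{t-1}x. Then (w_{t-1}−u)ᵀΣ_{t-1}⁻¹(w_{t-1}−u) − (w̃_t−u)ᵀΣ̃_t⁻¹(w̃_t−u) = ℓ/r − g/r − ℓχ/(r(r+χ)). -/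

import Mathlib

open Matrix

lemma vecMulVec_mulVec_aux {d : ℕ} (x z : Fin d → ℝ) :
    vecMulVec x x *ᵥ z = (x ⬝ᵥ z) • x := by
  ext i
  simp [Matrix.mulVec, Matrix.vecMulVec_apply, dotProduct, Finset.mul_sum,
    mul_comm, mul_left_comm]

/-- The per-step progress identity of ARCOR:
(w−u)ᵀΣ⁻¹(w−u) − (w̃−u)ᵀΣ̃⁻¹(w̃−u) = ℓ/r − g/r − ℓχ/(r(r+χ)). -/
theorem stmt_17 (d : ℕ) (r : ℝ) (hr : 0 < r)
    (Sigma : Matrix (Fin d) (Fin d) ℝ) (hS : Sigma.PosDef)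
    (x w u : Fin d → ℝ) (y : ℝ)
    (N : Matrix (Fin d) (Fin d) ℝ)
    (hN : N = Sigma⁻¹ + (1 / r) • vecMulVec x x)
    (wtil : Fin d → ℝ)
    (hwtil : wtil = w + ((y - x ⬝ᵥ w) / (r + x ⬝ᵥ (Sigma *ᵥ x))) • (Sigma *ᵥ x)) :
    (w - u) ⬝ᵥ (Sigma⁻¹ *ᵥ (w - u)) - (wtil - u) ⬝ᵥ (N *ᵥ (wtil - u))
      = (y - x ⬝ᵥ w) ^ 2 / r - (y - x ⬝ᵥ u) ^ 2 / r
        - (y - x ⬝ᵥ w) ^ 2 * (x ⬝ᵥ (Sigma *ᵥ x))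
            / (r * (r + x ⬝ᵥ (Sigma *ᵥ x))) := by
  have hdet : IsUnit Sigma.det := hS.det_pos.ne'.isUnit
  have hinv : Sigma⁻¹ * Sigma = 1 := Matrix.nonsing_inv_mul _ hdet
  have hinv' : Sigma * Sigma⁻¹ = 1 := Matrix.mul_nonsing_inv _ hdet
  have hT : Sigmaᵀ = Sigma := by
    have := hS.1.eq
    simpa using this
  set p : Fin d → ℝ := Sigma *ᵥ x with hp
  set χ : ℝ := x ⬝ᵥ p with hχdef
  have hχ : 0 ≤ χ := by
    have := hS.posSemidef.dotProduct_mulVec_nonneg x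
    simpa [hχdef, hp] using this
  have hrχ : 0 < r + χ := by linarith
  have hSp : Sigma⁻¹ *ᵥ p = x := by
    rw [hp, Matrix.mulVec_mulVec, hinv, Matrix.one_mulVec]
  have hpz : ∀ z : Fin d → ℝ, p ⬝ᵥ (Sigma⁻¹ *ᵥ z) = x ⬝ᵥ z := by
    intro z
    have h1 : p = x ᵥ* Sigma := by
      rw [hp, ← hT, Matrix.vecMul_transpose, hT]
    rw [h1, Matrix.dotProduct_mulVec, Matrix.vecMul_vecMul, ← Matrix.dotProduct_mulVec,
      ← Matrix.mulVec_mulVec, Matrix.mulVec_mulVec, hinv', Matrix.one_mulVec]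
  set v : Fin d → ℝ := w - u with hv
  set q : ℝ := y - x ⬝ᵥ w with hq
  set s : ℝ := q / (r + χ) with hs
  have hwtil' : wtil - u = v + s • p := by
    rw [hwtil, hv, hs, hq, hχdef, hp]
    abel
  have ha : x ⬝ᵥ v = (y - x ⬝ᵥ u) - q := by
    rw [hv, hq, dotProduct_sub]; ring
  set a : ℝ := x ⬝ᵥ v with hadef
  have key : (w - u) ⬝ᵥ (Sigma⁻¹ *ᵥ (w - u)) - (wtil - u) ⬝ᵥ (N *ᵥ (wtil - u))
      = -(2 * s * a) - s ^ 2 * χ - (1 / r) * (a + s * χ) ^ 2 := by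
    rw [hN, hwtil', ← hv]
    simp only [Matrix.add_mulVec, Matrix.mulVec_add, Matrix.mulVec_smul,
      Matrix.smul_mulVec, vecMulVec_mulVec_aux, dotProduct_add,
      add_dotProduct, dotProduct_smul, smul_dotProduct,
      smul_eq_mul, hSp, hpz, dotProduct_add, ← hadef, ← hχdef]
    have hcomm : v ⬝ᵥ x = a := by rw [hadef, dotProduct_comm]
    have hpx : p ⬝ᵥ x = χ := by rw [hχdef, dotProduct_comm]
    rw [hcomm, hpx]
    ring
  rw [key, ha]
  rw [hs]
  field_simp
  ring
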